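/- arXiv:1108.1456 — 7 statements merged into one kernel-verified Lean document; each statement's English description precedes it below -/
import Mathlib

section
/- In a two-player COG with linear best-response segments x₁ = f₁(x₂) = a₁ − b₁x₂ and x₂ = f₂(x₁) = a₂ − b₂x₁, where a₁ = (β₁/(α+β₁))(1 + P₂c₂₁/(P₁c₁₁)), b₁ = (β₁/(α+β₁))·P₂c₂₁/(P₁c₁₁), and analogously for player 2, if (c₁₂/c₂₂) < (P₂/P₁)·(α+β₁)/β₂ and (c₂₁/c₁₁) < (P₁/P₂)·(α+β₂)/β₁, then b₁·b₂ < 1 and the system x₁ = f₁(x₂), x₂ = f₂(x₁) has a unique solution, which lies in (0,1)². -/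
open Set

set_option maxHeartbeats 1600000 in
theorem stmt_5 (α β₁ β₂ P₁ P₂ c₁₁ c₂₂ c₁₂ c₂₁ : ℝ)
    (hα : 0 < α) (hβ₁ : 0 < β₁) (hβ₂ : 0 < β₂) (hP₁ : 0 < P₁) (hP₂ : 0 < P₂)
    (hc₁₁ : 0 < c₁₁) (hc₂₂ : 0 < c₂₂) (hc₁₂ : 0 < c₁₂) (hc₂₁ : 0 < c₂₁)
    (h1 : c₁₂ / c₂₂ < P₂ / P₁ * ((α + β₁) / β₂))
    (h2 : c₂₁ / c₁₁ < P₁ / P₂ * ((α + β₂) / β₁)) :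
    let b₁ := β₁ / (α + β₁) * (P₂ * c₂₁ / (P₁ * c₁₁))
    let b₂ := β₂ / (α + β₂) * (P₁ * c₁₂ / (P₂ * c₂₂))
    let f₁ := fun x₂ : ℝ => β₁ / (α + β₁) * (1 + P₂ * c₂₁ / (P₁ * c₁₁) * (1 - x₂))
    let f₂ := fun x₁ : ℝ => β₂ / (α + β₂) * (1 + P₁ * c₁₂ / (P₂ * c₂₂) * (1 - x₁))
    let BR₁ := fun x₂ : ℝ => min (f₁ x₂) 1
    let BR₂ := fun x₁ : ℝ => min (f₂ x₁) 1
    b₁ * b₂ < 1 ∧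
    (∃! p : ℝ × ℝ, p.1 = f₁ p.2 ∧ p.2 = f₂ p.1) ∧
    ∀ p : ℝ × ℝ, (p.1 = f₁ p.2 ∧ p.2 = f₂ p.1) →
      p.1 ∈ Ioo (0:ℝ) 1 ∧ p.2 ∈ Ioo (0:ℝ) 1 ∧
      ∀ q : ℝ × ℝ, q.1 ∈ Icc (0:ℝ) 1 → q.2 ∈ Icc (0:ℝ) 1 →
        q.1 = BR₁ q.2 → q.2 = BR₂ q.1 → q = p := by
  intro b₁ b₂ f₁ f₂ BR₁ BR₂
  have hA₁ : (0:ℝ) < α + β₁ := by linarith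
  have hA₂ : (0:ℝ) < α + β₂ := by linarith
  have hb₁def : b₁ = β₁ / (α + β₁) * (P₂ * c₂₁ / (P₁ * c₁₁)) := rfl
  have hb₂def : b₂ = β₂ / (α + β₂) * (P₁ * c₁₂ / (P₂ * c₂₂)) := rfl
  have hf₁ : ∀ x : ℝ, f₁ x = β₁ / (α + β₁) + b₁ * (1 - x) := by
    intro x
    rw [hb₁def]
    show β₁ / (α + β₁) * (1 + P₂ * c₂₁ / (P₁ * c₁₁) * (1 - x)) = _
    ring
  have hf₂ : ∀ x : ℝ, f₂ x = β₂ / (α + β₂) + b₂ * (1 - x) := by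
    intro x
    rw [hb₂def]
    show β₂ / (α + β₂) * (1 + P₁ * c₁₂ / (P₂ * c₂₂) * (1 - x)) = _
    ring
  have hBR₁ : ∀ x : ℝ, BR₁ x = min (f₁ x) 1 := fun _ => rfl
  have hBR₂ : ∀ x : ℝ, BR₂ x = min (f₂ x) 1 := fun _ => rfl
  clear_value b₁ b₂ f₁ f₂ BR₁ BR₂
  have hb₁pos : 0 < b₁ := by rw [hb₁def]; positivity
  have hb₂pos : 0 < b₂ := by rw [hb₂def]; positivity
  -- cleared-denominator versions of h1, h2
  have h2' : P₂ * c₂₁ * β₁ < P₁ * c₁₁ * (α + β₂) := by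
    have h := h2
    rw [div_lt_iff₀ hc₁₁] at h
    have h' := mul_lt_mul_of_pos_left h (by positivity : (0:ℝ) < P₂ * β₁)
    have e : P₂ * β₁ * (P₁ / P₂ * ((α + β₂) / β₁) * c₁₁) = P₁ * c₁₁ * (α + β₂) := by
      field_simp
    rw [e] at h'
    linarith
  have h1' : P₁ * c₁₂ * β₂ < P₂ * c₂₂ * (α + β₁) := by
    have h := h1
    rw [div_lt_iff₀ hc₂₂] at h
    have h' := mul_lt_mul_of_pos_left h (by positivity : (0:ℝ) < P₁ * β₂)
    have e : P₁ * β₂ * (P₂ / P₁ * ((α + β₁) / β₂) * c₂₂) = P₂ * c₂₂ * (α + β₁) := by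
      field_simp
    rw [e] at h'
    linarith
  have hb₁lt : b₁ * (α + β₁) < α + β₂ := by
    have e : b₁ * (α + β₁) = P₂ * c₂₁ * β₁ / (P₁ * c₁₁) := by
      rw [hb₁def]; field_simp
    rw [e, div_lt_iff₀ (by positivity : (0:ℝ) < P₁ * c₁₁)]
    nlinarith [h2']
  have hb₂lt : b₂ * (α + β₂) < α + β₁ := by
    have e : b₂ * (α + β₂) = P₁ * c₁₂ * β₂ / (P₂ * c₂₂) := by
      rw [hb₂def]; field_simp
    rw [e, div_lt_iff₀ (by positivity : (0:ℝ) < P₂ * c₂₂)]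
    nlinarith [h1']
  have hD : 0 < 1 - b₁ * b₂ := by
    nlinarith [mul_lt_mul_of_pos_left hb₂lt (mul_pos hb₁pos hA₁),
      mul_pos (mul_pos hb₁pos hA₁) hA₁]
  have hDne : (1 - b₁ * b₂) ≠ 0 := ne_of_gt hD
  -- key strict bounds
  have hK₁ : β₁ / (α + β₁) + b₁ * (1 - β₂ / (α + β₂)) < 1 := by
    have e : β₁ / (α + β₁) + b₁ * (1 - β₂ / (α + β₂))
        = (β₁ * (α + β₂) + b₁ * (α + β₁) * α) / ((α + β₁) * (α + β₂)) := by
      field_simp; ring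
    rw [e, div_lt_one (mul_pos hA₁ hA₂)]
    nlinarith [hb₁lt]
  have hK₂ : β₂ / (α + β₂) + b₂ * (1 - β₁ / (α + β₁)) < 1 := by
    have e : β₂ / (α + β₂) + b₂ * (1 - β₁ / (α + β₁))
        = (β₂ * (α + β₁) + b₂ * (α + β₂) * α) / ((α + β₁) * (α + β₂)) := by
      field_simp; ring
    rw [e, div_lt_one (mul_pos hA₁ hA₂)]
    nlinarith [hb₂lt]
  obtain ⟨N₁, hN₁⟩ : ∃ n : ℝ, n = β₁ / (α + β₁) + b₁ * (1 - β₂ / (α + β₂) - b₂) := ⟨_, rfl⟩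
  obtain ⟨N₂, hN₂⟩ : ∃ n : ℝ, n = β₂ / (α + β₂) + b₂ * (1 - β₁ / (α + β₁) - b₁) := ⟨_, rfl⟩
  have hN₁pos : 0 < N₁ := by
    have e : N₁ * ((α + β₁) * (α + β₂))
        = β₁ * (α + β₂) + b₁ * (α + β₁) * α - b₁ * (α + β₁) * (b₂ * (α + β₂)) := by
      rw [hN₁]; field_simp; ring
    nlinarith [mul_lt_mul_of_pos_left hb₂lt (mul_pos hb₁pos hA₁),
      mul_lt_mul_of_pos_right hb₁lt hβ₁, mul_pos hA₁ hA₂, e]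
  have hN₂pos : 0 < N₂ := by
    have e : N₂ * ((α + β₁) * (α + β₂))
        = β₂ * (α + β₁) + b₂ * (α + β₂) * α - b₂ * (α + β₂) * (b₁ * (α + β₁)) := by
      rw [hN₂]; field_simp; ring
    nlinarith [mul_lt_mul_of_pos_left hb₁lt (mul_pos hb₂pos hA₂),
      mul_lt_mul_of_pos_right hb₂lt hβ₂, mul_pos hA₁ hA₂, e]
  obtain ⟨x₁, hx₁⟩ : ∃ x : ℝ, x = N₁ / (1 - b₁ * b₂) := ⟨_, rfl⟩
  obtain ⟨x₂, hx₂⟩ : ∃ x : ℝ, x = N₂ / (1 - b₁ * b₂) := ⟨_, rfl⟩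
  have hs1 : x₁ = f₁ x₂ := by
    rw [hf₁, hx₁, hx₂, hN₁, hN₂]
    field_simp
    ring
  have hs2 : x₂ = f₂ x₁ := by
    rw [hf₂, hx₁, hx₂, hN₁, hN₂]
    have hDne' : 1 - b₂ * b₁ ≠ 0 := by rw [mul_comm]; exact hDne
    field_simp
    ring
  have huniq : ∀ q : ℝ × ℝ, q.1 = f₁ q.2 → q.2 = f₂ q.1 → q = (x₁, x₂) := by
    intro q hq1 hq2
    rw [hf₁] at hq1
    rw [hf₂] at hq2
    have e1 : q.1 * (1 - b₁ * b₂) = N₁ := by rw [hN₁]; nlinarith [hq1, hq2]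
    have e2 : q.2 * (1 - b₁ * b₂) = N₂ := by rw [hN₂]; nlinarith [hq1, hq2]
    have q1 : q.1 = x₁ := by rw [hx₁, eq_div_iff hDne]; exact e1
    have q2 : q.2 = x₂ := by rw [hx₂, eq_div_iff hDne]; exact e2
    exact Prod.ext q1 q2
  have hx₁mem : x₁ ∈ Ioo (0:ℝ) 1 := by
    constructor
    · rw [hx₁]; exact div_pos hN₁pos hD
    · rw [hx₁, div_lt_one hD]
      have e : N₁ = (β₁ / (α + β₁) + b₁ * (1 - β₂ / (α + β₂))) - b₁ * b₂ := by
        rw [hN₁]; ring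
      linarith [hK₁, e]
  have hx₂mem : x₂ ∈ Ioo (0:ℝ) 1 := by
    constructor
    · rw [hx₂]; exact div_pos hN₂pos hD
    · rw [hx₂, div_lt_one hD]
      have e : N₂ = (β₂ / (α + β₂) + b₂ * (1 - β₁ / (α + β₁))) - b₂ * b₁ := by
        rw [hN₂]; ring
      linarith [hK₂, e]
  have hr₁lt : β₁ / (α + β₁) < 1 := by rw [div_lt_one hA₁]; linarith
  have hr₂lt : β₂ / (α + β₂) < 1 := by rw [div_lt_one hA₂]; linarith
  refine ⟨by linarith, ⟨(x₁, x₂), ⟨hs1, hs2⟩, fun q hq => huniq q hq.1 hq.2⟩, ?_⟩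
  intro p hp
  have hpe : p = (x₁, x₂) := huniq p hp.1 hp.2
  refine ⟨by rw [hpe]; exact hx₁mem, by rw [hpe]; exact hx₂mem, ?_⟩
  intro q hq1m hq2m hq1 hq2
  rw [hBR₁] at hq1
  rw [hBR₂] at hq2
  rcases le_or_gt (f₁ q.2) 1 with hc1 | hc1
  · rcases le_or_gt (f₂ q.1) 1 with hc2 | hc2
    · rw [min_eq_left hc1] at hq1
      rw [min_eq_left hc2] at hq2
      rw [hpe]; exact huniq q hq1 hq2
    · -- f₂ q.1 > 1 : then q.2 = 1, so f₁ q.2 = r₁ < 1, q.1 = r₁, then f₂ q.1 < 1, contra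
      exfalso
      have hq2v : q.2 = 1 := by rw [hq2, min_eq_right hc2.le]
      have hf1v : f₁ q.2 = β₁ / (α + β₁) := by rw [hf₁, hq2v]; ring
      have hq1v : q.1 = β₁ / (α + β₁) := by
        rw [hq1, hf1v, min_eq_left hr₁lt.le]
      have : f₂ q.1 = β₂ / (α + β₂) + b₂ * (1 - β₁ / (α + β₁)) := by
        rw [hf₂, hq1v]
      linarith [hK₂]
  · -- f₁ q.2 > 1 : then q.1 = 1, f₂ q.1 = r₂ < 1, q.2 = r₂, f₁ q.2 < 1, contra
    exfalso
    have hq1v : q.1 = 1 := by rw [hq1, min_eq_right hc1.le]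
    have hf2v : f₂ q.1 = β₂ / (α + β₂) := by rw [hf₂, hq1v]; ring
    have hq2v : q.2 = β₂ / (α + β₂) := by
      rw [hq2, hf2v, min_eq_left hr₂lt.le]
    have : f₁ q.2 = β₁ / (α + β₁) + b₁ * (1 - β₂ / (α + β₂)) := by
      rw [hf₁, hq2v]
    linarith [hK₁]
end

section
/- In a two-player COG, if (c₁₂/c₂₂) ≥ (P₂/P₁)·(α+β₁)/β₂ and (c₂₁/c₁₁) < (P₁/P₂)·(α+β₂)/β₁, then the point (x₁, x₂) = (β₁/(α+β₁), 1) is the unique simultaneous fixed point of the best-response maps BR₁(x₂) = min{a₁ − b₁x₂, 1} and BR₂(x₁) = min{a₂ − b₂x₁, 1} over [0,1]². -/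
open Set

theorem stmt_6 (α β₁ β₂ P₁ P₂ c₁₁ c₂₂ c₁₂ c₂₁ : ℝ)
    (hα : 0 < α) (hβ₁ : 0 < β₁) (hβ₂ : 0 < β₂) (hP₁ : 0 < P₁) (hP₂ : 0 < P₂)
    (hc₁₁ : 0 < c₁₁) (hc₂₂ : 0 < c₂₂) (hc₁₂ : 0 < c₁₂) (hc₂₁ : 0 < c₂₁)
    (h1 : P₂ / P₁ * ((α + β₁) / β₂) ≤ c₁₂ / c₂₂)
    (h2 : c₂₁ / c₁₁ < P₁ / P₂ * ((α + β₂) / β₁)) :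
    let BR₁ := fun x₂ : ℝ =>
      min (β₁ / (α + β₁) * (1 + P₂ * c₂₁ / (P₁ * c₁₁) * (1 - x₂))) 1
    let BR₂ := fun x₁ : ℝ =>
      min (β₂ / (α + β₂) * (1 + P₁ * c₁₂ / (P₂ * c₂₂) * (1 - x₁))) 1
    ∀ x₁ x₂ : ℝ, x₁ ∈ Icc (0:ℝ) 1 → x₂ ∈ Icc (0:ℝ) 1 →
      ((x₁ = BR₁ x₂ ∧ x₂ = BR₂ x₁) ↔ (x₁ = β₁ / (α + β₁) ∧ x₂ = 1)) := by
  intro BR₁ BR₂ x₁ x₂ hx₁ hx₂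
  have hs₁ : 0 < α + β₁ := by linarith
  have hs₂ : 0 < α + β₂ := by linarith
  set t₁ : ℝ := P₂ * c₂₁ / (P₁ * c₁₁) with ht₁
  set t₂ : ℝ := P₁ * c₁₂ / (P₂ * c₂₂) with ht₂
  -- clear denominators in hypotheses
  rw [div_mul_div_comm, div_le_div_iff₀ (by positivity) (by positivity)] at h1
  rw [div_mul_div_comm, div_lt_div_iff₀ (by positivity) (by positivity)] at h2
  have hk₁ : β₁ * t₁ < α + β₂ := by
    rw [ht₁, ← mul_div_assoc, div_lt_iff₀ (by positivity)]
    nlinarith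
  have hk₂ : α + β₁ ≤ β₂ * t₂ := by
    rw [ht₂, ← mul_div_assoc, le_div_iff₀ (by positivity)]
    nlinarith
  have hr₁lt : β₁ / (α + β₁) < 1 := by
    rw [div_lt_one hs₁]; linarith
  constructor
  · rintro ⟨h₁, h₂⟩
    simp only [BR₁, BR₂] at h₁ h₂
    rcases le_or_gt 1 (β₂ / (α + β₂) * (1 + t₂ * (1 - x₁))) with hB | hB
    · -- x₂ = 1
      have hx2 : x₂ = 1 := by rw [h₂, min_eq_right hB]
      subst hx2
      refine ⟨?_, rfl⟩
      rw [h₁]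
      norm_num
      exact hr₁lt.le
    · exfalso
      have hBe : x₂ = β₂ / (α + β₂) * (1 + t₂ * (1 - x₁)) := by
        rw [h₂, min_eq_left hB.le]
      have hA : x₁ ≤ β₁ / (α + β₁) * (1 + t₁ * (1 - x₂)) := h₁ ▸ min_le_left _ _
      rw [div_mul_eq_mul_div, le_div_iff₀ hs₁] at hA
      rw [div_mul_eq_mul_div, eq_div_iff hs₂.ne'] at hBe
      have hx2lt : x₂ < 1 := by
        have := h₂ ▸ min_le_left (β₂ / (α + β₂) * (1 + t₂ * (1 - x₁))) 1
        linarith [h₂ ▸ min_le_right (β₂ / (α + β₂) * (1 + t₂ * (1 - x₁))) 1,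
          hBe]
        -- fallback
      have hu : (0:ℝ) ≤ 1 - x₁ := by linarith [hx₁.2]
      have hv : (0:ℝ) < 1 - x₂ := by linarith
      nlinarith [mul_lt_mul_of_pos_right hk₁ hv, mul_le_mul_of_nonneg_right hk₂ hu]
  · rintro ⟨rfl, rfl⟩
    constructor
    · show _ = min (β₁ / (α + β₁) * (1 + t₁ * (1 - 1))) 1
      norm_num
      exact hr₁lt.le
    · show (1:ℝ) = min (β₂ / (α + β₂) * (1 + t₂ * (1 - β₁ / (α + β₁)))) 1
      rw [min_eq_right]
      rw [div_mul_eq_mul_div, le_div_iff₀ hs₂]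
      have e1 : 1 - β₁ / (α + β₁) = α / (α + β₁) := by field_simp; ring
      rw [e1]
      have e2 : (α + β₁) * (α / (α + β₁)) = α := by field_simp
      have hd : (0:ℝ) ≤ α / (α + β₁) := by positivity
      nlinarith [mul_le_mul_of_nonneg_right hk₂ hd, e2]
end

section
/- In a two-player COG, if (c₁₂/c₂₂) > (P₂/P₁)·(α+β₁)/β₂ and (c₂₁/c₁₁) > (P₁/P₂)·(α+β₂)/β₁, then the simultaneous best-response fixed-point equations have exactly three solutions in [0,1]²: the interior solution of the two linear equations, the point (β₁/(α+β₁), 1), and the point (1, β₂/(α+β₂)). -/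
open Set

lemma cog_key (a b r s : ℝ) (ha0 : 0 < a) (ha1 : a < 1) (hb0 : 0 < b) (hb1 : b < 1)
    (hr : 0 < r) (hs : 0 < s)
    (h1' : 1 - b < b * s * (1 - a)) (h2' : 1 - a < a * r * (1 - b)) :
    ∃ p : ℝ × ℝ,
      (p.1 = a * (1 + r * (1 - p.2)) ∧ p.2 = b * (1 + s * (1 - p.1))) ∧
      p.1 ∈ Ioo a 1 ∧ p.2 ∈ Ioo b 1 ∧
      p ≠ (a, 1) ∧ p ≠ (1, b) ∧ ((a, (1:ℝ)) : ℝ × ℝ) ≠ (1, b) ∧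
      ∀ q : ℝ × ℝ, q.1 ∈ Icc (0:ℝ) 1 → q.2 ∈ Icc (0:ℝ) 1 →
        ((q.1 = min (a * (1 + r * (1 - q.2))) 1 ∧ q.2 = min (b * (1 + s * (1 - q.1))) 1) ↔
          (q = p ∨ q = (a, 1) ∨ q = (1, b))) := by
  have h1a : 0 < 1 - a := by linarith
  have h1b : 0 < 1 - b := by linarith
  have hD : 0 < a * b * r * s - 1 := by
    nlinarith [mul_lt_mul'' h2' h1' (le_of_lt h1a) (le_of_lt h1b), mul_pos h1a h1b]
  have hDne : a * b * r * s - 1 ≠ 0 := ne_of_gt hD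
  obtain ⟨p1, hp1⟩ : ∃ x : ℝ, x = a * (r * (b + b * s - 1) - 1) / (a * b * r * s - 1) := ⟨_, rfl⟩
  obtain ⟨p2, hp2⟩ : ∃ x : ℝ, x = b * (s * (a + a * r - 1) - 1) / (a * b * r * s - 1) := ⟨_, rfl⟩
  have E1 : p1 = a * (1 + r * (1 - p2)) := by
    rw [hp1, hp2, div_eq_iff hDne]; linear_combination (a * r) * div_mul_cancel₀ (b * (s * (a + a * r - 1) - 1)) hDne
  have E2 : p2 = b * (1 + s * (1 - p1)) := by
    rw [hp1, hp2, div_eq_iff hDne]; linear_combination (b * s) * div_mul_cancel₀ (a * (r * (b + b * s - 1) - 1)) hDne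
  have t1 : 0 < b * s * (1 - a) - (1 - b) := by linarith
  have t2 : 0 < a * r * (1 - b) - (1 - a) := by linarith
  have I1 : a < p1 := by
    rw [hp1, lt_div_iff₀ hD]
    nlinarith [mul_pos (mul_pos ha0 hr) t1]
  have I2 : p1 < 1 := by
    rw [hp1, div_lt_one hD]
    nlinarith [mul_pos ha0 t2]
  have I3 : b < p2 := by
    rw [hp2, lt_div_iff₀ hD]
    nlinarith [mul_pos (mul_pos hb0 hs) t2]
  have I4 : p2 < 1 := by
    rw [hp2, div_lt_one hD]
    nlinarith [mul_pos hb0 t1]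
  refine ⟨(p1, p2), ⟨E1, E2⟩, ⟨I1, I2⟩, ⟨I3, I4⟩, ?_, ?_, ?_, ?_⟩
  · intro h
    rw [Prod.ext_iff] at h
    exact absurd h.1 (ne_of_gt I1)
  · intro h
    rw [Prod.ext_iff] at h
    exact absurd h.1 (ne_of_lt I2)
  · intro h
    rw [Prod.ext_iff] at h
    exact absurd h.1 (ne_of_lt ha1)
  · intro q hq1 hq2
    constructor
    · rintro ⟨e1, e2⟩
      by_cases hA : a * (1 + r * (1 - q.2)) ≤ 1
      · by_cases hB : b * (1 + s * (1 - q.1)) ≤ 1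
        · rw [min_eq_left hA] at e1
          rw [min_eq_left hB] at e2
          have hz : (1 - a * b * r * s) * (q.1 - p1) = 0 := by
            linear_combination e1 - E1 - a * r * (e2 - E2)
          have q1p : q.1 = p1 := by
            rcases mul_eq_zero.mp hz with h | h
            · exfalso; nlinarith
            · linarith
          have q2p : q.2 = p2 := by
            linear_combination e2 - E2 - b * s * q1p
          exact Or.inl (Prod.ext q1p q2p)
        · push_neg at hB
          rw [min_eq_right hB.le] at e2
          rw [e2] at e1
          have ha' : a * (1 + r * (1 - 1)) = a := by ring
          rw [ha', min_eq_left ha1.le] at e1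
          exact Or.inr (Or.inl (Prod.ext e1 e2))
      · push_neg at hA
        rw [min_eq_right hA.le] at e1
        rw [e1] at e2
        have hb' : b * (1 + s * (1 - 1)) = b := by ring
        rw [hb', min_eq_left hb1.le] at e2
        exact Or.inr (Or.inr (Prod.ext e1 e2))
    · rintro (rfl | rfl | rfl)
      · refine ⟨?_, ?_⟩
        · show p1 = min (a * (1 + r * (1 - p2))) 1
          rw [← E1, min_eq_left I2.le]
        · show p2 = min (b * (1 + s * (1 - p1))) 1
          rw [← E2, min_eq_left I4.le]
      · refine ⟨?_, ?_⟩
        · show a = min (a * (1 + r * (1 - 1))) 1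
          have ha' : a * (1 + r * (1 - 1)) = a := by ring
          rw [ha', min_eq_left ha1.le]
        · show (1:ℝ) = min (b * (1 + s * (1 - a))) 1
          have hgt : 1 ≤ b * (1 + s * (1 - a)) := by nlinarith
          rw [min_eq_right hgt]
      · refine ⟨?_, ?_⟩
        · show (1:ℝ) = min (a * (1 + r * (1 - b))) 1
          have hgt : 1 ≤ a * (1 + r * (1 - b)) := by nlinarith
          rw [min_eq_right hgt]
        · show b = min (b * (1 + s * (1 - 1))) 1
          have hb' : b * (1 + s * (1 - 1)) = b := by ring
          rw [hb', min_eq_left hb1.le]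

theorem stmt_7 (α β₁ β₂ P₁ P₂ c₁₁ c₂₂ c₁₂ c₂₁ : ℝ)
    (hα : 0 < α) (hβ₁ : 0 < β₁) (hβ₂ : 0 < β₂) (hP₁ : 0 < P₁) (hP₂ : 0 < P₂)
    (hc₁₁ : 0 < c₁₁) (hc₂₂ : 0 < c₂₂) (hc₁₂ : 0 < c₁₂) (hc₂₁ : 0 < c₂₁)
    (h1 : P₂ / P₁ * ((α + β₁) / β₂) < c₁₂ / c₂₂)
    (h2 : P₁ / P₂ * ((α + β₂) / β₁) < c₂₁ / c₁₁) :
    let f₁ := fun x₂ : ℝ => β₁ / (α + β₁) * (1 + P₂ * c₂₁ / (P₁ * c₁₁) * (1 - x₂))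
    let f₂ := fun x₁ : ℝ => β₂ / (α + β₂) * (1 + P₁ * c₁₂ / (P₂ * c₂₂) * (1 - x₁))
    let BR₁ := fun x₂ : ℝ => min (f₁ x₂) 1
    let BR₂ := fun x₁ : ℝ => min (f₂ x₁) 1
    ∃ p : ℝ × ℝ, (p.1 = f₁ p.2 ∧ p.2 = f₂ p.1) ∧
      p.1 ∈ Ioo (β₁ / (α + β₁)) 1 ∧ p.2 ∈ Ioo (β₂ / (α + β₂)) 1 ∧
      p ≠ (β₁ / (α + β₁), 1) ∧ p ≠ (1, β₂ / (α + β₂)) ∧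
      ((β₁ / (α + β₁), (1:ℝ)) : ℝ × ℝ) ≠ (1, β₂ / (α + β₂)) ∧
      ∀ q : ℝ × ℝ, q.1 ∈ Icc (0:ℝ) 1 → q.2 ∈ Icc (0:ℝ) 1 →
        ((q.1 = BR₁ q.2 ∧ q.2 = BR₂ q.1) ↔
          (q = p ∨ q = (β₁ / (α + β₁), 1) ∨ q = (1, β₂ / (α + β₂)))) := by
  intro f₁ f₂ BR₁ BR₂
  have hA : 0 < α + β₁ := by linarith
  have hB : 0 < α + β₂ := by linarith
  have ha0 : 0 < β₁ / (α + β₁) := by positivity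
  have hb0 : 0 < β₂ / (α + β₂) := by positivity
  have ha1 : β₁ / (α + β₁) < 1 := by rw [div_lt_one hA]; linarith
  have hb1 : β₂ / (α + β₂) < 1 := by rw [div_lt_one hB]; linarith
  have hr : 0 < P₂ * c₂₁ / (P₁ * c₁₁) := by positivity
  have hs : 0 < P₁ * c₁₂ / (P₂ * c₂₂) := by positivity
  -- translate h1 : s > (α+β₁)/β₂
  have hs_gt : (α + β₁) / β₂ < P₁ * c₁₂ / (P₂ * c₂₂) := by
    rw [div_lt_div_iff₀ hβ₂ (by positivity)]
    have m := mul_lt_mul_of_pos_right h1 (by positivity : (0:ℝ) < P₁ * β₂ * c₂₂)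
    have eL : P₂ / P₁ * ((α + β₁) / β₂) * (P₁ * β₂ * c₂₂) = (α + β₁) * (P₂ * c₂₂) := by
      field_simp
    have eR : c₁₂ / c₂₂ * (P₁ * β₂ * c₂₂) = P₁ * c₁₂ * β₂ := by field_simp
    linarith
  have hr_gt : (α + β₂) / β₁ < P₂ * c₂₁ / (P₁ * c₁₁) := by
    rw [div_lt_div_iff₀ hβ₁ (by positivity)]
    have m := mul_lt_mul_of_pos_right h2 (by positivity : (0:ℝ) < P₂ * β₁ * c₁₁)
    have eL : P₁ / P₂ * ((α + β₂) / β₁) * (P₂ * β₁ * c₁₁) = (α + β₂) * (P₁ * c₁₁) := by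
      field_simp
    have eR : c₂₁ / c₁₁ * (P₂ * β₁ * c₁₁) = P₂ * c₂₁ * β₁ := by field_simp
    linarith
  have key1 : β₂ / (α + β₂) * ((α + β₁) / β₂) * (1 - β₁ / (α + β₁)) = 1 - β₂ / (α + β₂) := by
    field_simp
    ring
  have key2 : β₁ / (α + β₁) * ((α + β₂) / β₁) * (1 - β₂ / (α + β₂)) = 1 - β₁ / (α + β₁) := by
    field_simp
    ring
  have h1' : 1 - β₂ / (α + β₂) <
      β₂ / (α + β₂) * (P₁ * c₁₂ / (P₂ * c₂₂)) * (1 - β₁ / (α + β₁)) := by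
    have := mul_lt_mul_of_pos_right (mul_lt_mul_of_pos_left hs_gt hb0)
      (by linarith : 0 < 1 - β₁ / (α + β₁))
    linarith [key1]
  have h2' : 1 - β₁ / (α + β₁) <
      β₁ / (α + β₁) * (P₂ * c₂₁ / (P₁ * c₁₁)) * (1 - β₂ / (α + β₂)) := by
    have := mul_lt_mul_of_pos_right (mul_lt_mul_of_pos_left hr_gt ha0)
      (by linarith : 0 < 1 - β₂ / (α + β₂))
    linarith [key2]
  exact cog_key (β₁ / (α + β₁)) (β₂ / (α + β₂)) (P₂ * c₂₁ / (P₁ * c₁₁))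
    (P₁ * c₁₂ / (P₂ * c₂₂)) ha0 ha1 hb0 hb1 hr hs h1' h2'
end

section
/- Under the weak-interference conditions Σ_{j≠k} P_j c_{j,k} < (α/β_k)·P_k c_{k,k} for all k, the K-player COG has a unique Nash equilibrium, given by x* = (I − A)⁻¹ b, where A(k,j) = −(β_k/(α+β_k))(P_j c_{j,k})/(P_k c_{k,k}) for j ≠ k, A(k,k) = 0, and b(k) = (β_k/(α+β_k))·(Σ_{j} P_j c_{j,k})/(P_k c_{k,k}). In particular I − A is invertible and x* ∈ (0,1)^K. -/
open Real Set

/-- The achievable-rate utility of player `k` in the capacity offload game. -/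
noncomputable def util (K : ℕ) (α n₀ : ℝ) (β P : Fin K → ℝ)
    (c : Fin K → Fin K → ℝ) (k : Fin K) (x : Fin K → ℝ) : ℝ :=
  α * Real.logb 2 (1 + (1 - x k) * P k * c k k /
      (n₀ * α + ∑ j ∈ Finset.univ.erase k, (1 - x j) * P j * c j k)) +
  β k * Real.logb 2 (1 + x k * P k * c k k / (n₀ * β k))

private lemma wlog_le {p q a b a' b' : ℝ} (hp : 0 < p) (hq : 0 < q) (ha : 0 < a) (hb : 0 < b)
    (ha' : a' = p / (p + q) * (a + b)) (hb' : b' = q / (p + q) * (a + b)) :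
    p * Real.log a + q * Real.log b ≤ p * Real.log a' + q * Real.log b' ∧
      (a ≠ a' → p * Real.log a + q * Real.log b < p * Real.log a' + q * Real.log b') := by
  have hpq : 0 < p + q := by linarith
  have hS : 0 < a + b := by linarith
  have ha0 : 0 < a' := by rw [ha']; positivity
  have hb0 : 0 < b' := by rw [hb']; positivity
  have e1 : Real.log (a / a') = Real.log a - Real.log a' := Real.log_div ha.ne' ha0.ne'
  have e2 : Real.log (b / b') = Real.log b - Real.log b' := Real.log_div hb.ne' hb0.ne'
  have hsum : p * (a / a' - 1) + q * (b / b' - 1) = 0 := by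
    rw [ha', hb']; field_simp; ring
  have h2 : Real.log (b / b') ≤ b / b' - 1 := Real.log_le_sub_one_of_pos (by positivity)
  rw [e2] at h2
  constructor
  · have h1 : Real.log (a / a') ≤ a / a' - 1 := Real.log_le_sub_one_of_pos (by positivity)
    rw [e1] at h1
    nlinarith [mul_le_mul_of_nonneg_left h1 hp.le, mul_le_mul_of_nonneg_left h2 hq.le]
  · intro hne
    have hne' : a / a' ≠ 1 := fun h => hne ((div_eq_one_iff_eq ha0.ne').mp h)
    have h1 : Real.log (a / a') < a / a' - 1 :=
      Real.log_lt_sub_one_of_pos (by positivity) hne'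
    rw [e1] at h1
    nlinarith [mul_lt_mul_of_pos_left h1 hp, mul_le_mul_of_nonneg_left h2 hq.le]

private lemma single_opt {p q n G I y ys : ℝ} (hp : 0 < p) (hq : 0 < q) (hn : 0 < n)
    (hG : 0 < G) (hI : 0 ≤ I) (hy0 : 0 ≤ y) (hy1 : y ≤ 1)
    (hys : ys = q / (p + q) * ((I + G) / G)) :
    (p * Real.logb 2 (1 + (1 - y) * G / (n * p + I)) + q * Real.logb 2 (1 + y * G / (n * q))
      ≤ p * Real.logb 2 (1 + (1 - ys) * G / (n * p + I))
        + q * Real.logb 2 (1 + ys * G / (n * q)))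
    ∧ (y ≠ ys →
      p * Real.logb 2 (1 + (1 - y) * G / (n * p + I)) + q * Real.logb 2 (1 + y * G / (n * q))
      < p * Real.logb 2 (1 + (1 - ys) * G / (n * p + I))
        + q * Real.logb 2 (1 + ys * G / (n * q))) := by
  have hD : 0 < n * p + I := by positivity
  have hpq : 0 < p + q := by linarith
  have hnq : 0 < n * q := by positivity
  have ha1 : 0 < n * p + I + (1 - y) * G := by nlinarith
  have hb1 : 0 < n * q + y * G := by nlinarith
  have hSpos : 0 < n * p + I + (1 - y) * G + (n * q + y * G) := by linarith
  have ha2 : n * p + I + (1 - ys) * G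
      = p / (p + q) * (n * p + I + (1 - y) * G + (n * q + y * G)) := by
    rw [hys]; field_simp; ring
  have hb2 : n * q + ys * G
      = q / (p + q) * (n * p + I + (1 - y) * G + (n * q + y * G)) := by
    rw [hys]; field_simp; ring
  have ha2p : 0 < n * p + I + (1 - ys) * G := by
    rw [ha2]; exact mul_pos (div_pos hp hpq) hSpos
  have hb2p : 0 < n * q + ys * G := by
    rw [hb2]; exact mul_pos (div_pos hq hpq) hSpos
  obtain ⟨hle, hlt⟩ := wlog_le hp hq ha1 hb1 ha2 hb2
  have E1 : 1 + (1 - y) * G / (n * p + I) = (n * p + I + (1 - y) * G) / (n * p + I) := by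
    field_simp
  have E2 : 1 + y * G / (n * q) = (n * q + y * G) / (n * q) := by field_simp
  have E3 : 1 + (1 - ys) * G / (n * p + I) = (n * p + I + (1 - ys) * G) / (n * p + I) := by
    field_simp
  have E4 : 1 + ys * G / (n * q) = (n * q + ys * G) / (n * q) := by field_simp
  rw [E1, E2, E3, E4]
  have L2 : 0 < Real.log 2 := Real.log_pos one_lt_two
  have F : ∀ u v : ℝ, 0 < u → 0 < v →
      Real.logb 2 (u / v) = (Real.log u - Real.log v) / Real.log 2 := by
    intro u v hu hv; rw [Real.logb, Real.log_div hu.ne' hv.ne']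
  rw [F _ _ ha1 hD, F _ _ hb1 hnq, F _ _ ha2p hD, F _ _ hb2p hnq]
  have G1 : ∀ X B : ℝ, p * ((X - Real.log (n * p + I)) / Real.log 2)
      + q * ((B - Real.log (n * q)) / Real.log 2)
      = (p * X + q * B) / Real.log 2
        - (p * Real.log (n * p + I) + q * Real.log (n * q)) / Real.log 2 := by
    intro X B; field_simp; ring
  rw [G1, G1]
  constructor
  · exact sub_le_sub_right ((div_le_div_iff_of_pos_right L2).mpr hle) _
  · intro hne
    have hane : n * p + I + (1 - y) * G ≠ n * p + I + (1 - ys) * G := by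
      intro h
      apply hne
      have h' : (1 - y) * G = (1 - ys) * G := by linarith
      have := mul_right_cancel₀ hG.ne' h'
      linarith
    exact sub_lt_sub_right ((div_lt_div_iff_of_pos_right L2).mpr (hlt hane)) _

theorem stmt_10 (K : ℕ) (α n₀ : ℝ) (β P : Fin K → ℝ) (c : Fin K → Fin K → ℝ)
    (hα : 0 < α) (hn : 0 < n₀) (hβ : ∀ k, 0 < β k) (hP : ∀ k, 0 < P k)
    (hc : ∀ j k, 0 < c j k)
    (hw : ∀ k, (∑ j ∈ Finset.univ.erase k, P j * c j k) < α / β k * (P k * c k k))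
    (A : Matrix (Fin K) (Fin K) ℝ)
    (hA : ∀ k j, A k j =
      if j = k then 0 else -(β k / (α + β k)) * (P j * c j k / (P k * c k k)))
    (b : Fin K → ℝ)
    (hb : ∀ k, b k = β k / (α + β k) * ((∑ j, P j * c j k) / (P k * c k k))) :
    IsUnit (1 - A) ∧
    ∃ x : Fin K → ℝ,
      x = (1 - A)⁻¹.mulVec b ∧ (∀ k, x k ∈ Ioo (0:ℝ) 1) ∧
      ((∀ k, x k ∈ Icc (0:ℝ) 1) ∧
        ∀ k : Fin K, ∀ y ∈ Icc (0:ℝ) 1,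
          util K α n₀ β P c k (Function.update x k y) ≤ util K α n₀ β P c k x) ∧
      ∀ z : Fin K → ℝ,
        ((∀ k, z k ∈ Icc (0:ℝ) 1) ∧
          ∀ k : Fin K, ∀ y ∈ Icc (0:ℝ) 1,
            util K α n₀ β P c k (Function.update z k y) ≤ util K α n₀ β P c k z) →
        z = x := by
  have hG : ∀ k, 0 < P k * c k k := fun k => mul_pos (hP k) (hc k k)
  set w : Fin K → ℝ := fun k => β k / (α + β k) with hwdef
  have hw0 : ∀ k, 0 < w k := fun k => div_pos (hβ k) (by linarith [hβ k])
  have hw1 : ∀ k, w k < 1 := by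
    intro k
    have : 0 < α + β k := by linarith [hβ k]
    simp only [hwdef]
    rw [div_lt_one this]
    linarith
  set r : Fin K → Fin K → ℝ := fun j k => P j * c j k / (P k * c k k) with hrdef
  have hr0 : ∀ j k, 0 < r j k := fun j k => div_pos (mul_pos (hP j) (hc j k)) (hG k)
  have hρ1 : ∀ k, w k * (∑ j ∈ Finset.univ.erase k, r j k) < 1 - w k := by
    intro k
    have h1 : ∑ j ∈ Finset.univ.erase k, r j k
        = (∑ j ∈ Finset.univ.erase k, P j * c j k) / (P k * c k k) := by
      simp only [hrdef]; rw [Finset.sum_div]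
    have h2 : (∑ j ∈ Finset.univ.erase k, P j * c j k) / (P k * c k k) < α / β k := by
      rw [div_lt_iff₀ (hG k)]
      calc (∑ j ∈ Finset.univ.erase k, P j * c j k) < α / β k * (P k * c k k) := hw k
        _ = α / β k * (P k * c k k) := rfl
    have h4 : w k * (∑ j ∈ Finset.univ.erase k, r j k) < w k * (α / β k) := by
      rw [h1]; exact mul_lt_mul_of_pos_left h2 (hw0 k)
    have h5 : w k * (α / β k) = 1 - w k := by
      simp only [hwdef]
      have h6 : (α : ℝ) + β k ≠ 0 := (show (0:ℝ) < α + β k by linarith [hβ k]).ne'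
      have h7 : (β k : ℝ) ≠ 0 := (hβ k).ne'
      field_simp
      ring
    linarith
  have hρnn : ∀ k, 0 ≤ w k * (∑ j ∈ Finset.univ.erase k, r j k) :=
    fun k => mul_nonneg (hw0 k).le (Finset.sum_nonneg fun j _ => (hr0 j k).le)
  -- mulVec computation
  have hAmv : ∀ (x : Fin K → ℝ) k,
      A.mulVec x k = -(w k * ∑ j ∈ Finset.univ.erase k, r j k * x j) := by
    intro x k
    have h0 : A.mulVec x k = ∑ j, A k j * x j := rfl
    rw [h0, ← Finset.add_sum_erase Finset.univ (fun j => A k j * x j) (Finset.mem_univ k),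
      hA k k, if_pos rfl, zero_mul, zero_add]
    calc ∑ j ∈ Finset.univ.erase k, A k j * x j
        = ∑ j ∈ Finset.univ.erase k, -(w k * (r j k * x j)) := by
          refine Finset.sum_congr rfl fun j hj => ?_
          rw [hA k j, if_neg (Finset.ne_of_mem_erase hj)]
          simp only [hwdef, hrdef]
          ring
      _ = -(w k * ∑ j ∈ Finset.univ.erase k, r j k * x j) := by
          rw [Finset.sum_neg_distrib, Finset.mul_sum]
  have hbk : ∀ k, b k = w k * (1 + ∑ j ∈ Finset.univ.erase k, r j k) := by
    intro k
    rw [hb k]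
    have : (∑ j, P j * c j k) = P k * c k k + ∑ j ∈ Finset.univ.erase k, P j * c j k :=
      (Finset.add_sum_erase Finset.univ (fun j => P j * c j k) (Finset.mem_univ k)).symm
    rw [this, add_div, div_self (hG k).ne', Finset.sum_div]
    try simp only [hwdef, hrdef]
  have hmv : ∀ x : Fin K → ℝ, (1 - A).mulVec x = b ↔
      ∀ k, x k = w k * (1 + ∑ j ∈ Finset.univ.erase k, r j k * (1 - x j)) := by
    intro x
    rw [funext_iff]
    refine forall_congr' fun k => ?_
    rw [Matrix.sub_mulVec, Matrix.one_mulVec]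
    have hL : x k - A.mulVec x k = x k + w k * ∑ j ∈ Finset.univ.erase k, r j k * x j := by
      rw [hAmv]; ring
    have hsub : ∑ j ∈ Finset.univ.erase k, r j k * (1 - x j)
        = (∑ j ∈ Finset.univ.erase k, r j k) - ∑ j ∈ Finset.univ.erase k, r j k * x j := by
      rw [← Finset.sum_sub_distrib]
      exact Finset.sum_congr rfl fun j _ => by ring
    constructor
    · intro h
      have h' : x k + w k * ∑ j ∈ Finset.univ.erase k, r j k * x j
          = w k * (1 + ∑ j ∈ Finset.univ.erase k, r j k) := by
        rw [← hL, ← hbk k]; exact h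
      rw [hsub]
      linear_combination h'
    · intro h
      show x k - A.mulVec x k = b k
      rw [hL, hbk k]
      rw [hsub] at h
      linear_combination h
  -- determinant nonzero
  have hdet : (1 - A).det ≠ 0 := by
    intro hd
    obtain ⟨v, hv0, hv⟩ := Matrix.exists_mulVec_eq_zero_iff.mpr hd
    obtain ⟨j0, hj0⟩ := Function.ne_iff.mp hv0
    obtain ⟨k0, -, hk0⟩ := Finset.exists_max_image Finset.univ (fun j => |v j|)
      ⟨j0, Finset.mem_univ j0⟩
    have hM : 0 < |v k0| := lt_of_lt_of_le (abs_pos.mpr hj0) (hk0 j0 (Finset.mem_univ j0))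
    have hvk : v k0 = -(w k0 * ∑ j ∈ Finset.univ.erase k0, r j k0 * v j) := by
      have h1 : (1 - A).mulVec v k0 = 0 := by rw [hv]; rfl
      rw [Matrix.sub_mulVec, Matrix.one_mulVec] at h1
      have h2 : v k0 - A.mulVec v k0 = 0 := h1
      rw [hAmv] at h2
      linarith
    have h1 : |v k0| ≤ w k0 * ((∑ j ∈ Finset.univ.erase k0, r j k0) * |v k0|) := by
      have e0 : |v k0| = w k0 * |∑ j ∈ Finset.univ.erase k0, r j k0 * v j| := by
        rw [hvk, abs_neg, abs_mul, abs_of_pos (hw0 k0)]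
      have hstep : |∑ j ∈ Finset.univ.erase k0, r j k0 * v j|
          ≤ (∑ j ∈ Finset.univ.erase k0, r j k0) * |v k0| := by
        calc |∑ j ∈ Finset.univ.erase k0, r j k0 * v j|
            ≤ ∑ j ∈ Finset.univ.erase k0, |r j k0 * v j| := Finset.abs_sum_le_sum_abs _ _
          _ = ∑ j ∈ Finset.univ.erase k0, r j k0 * |v j| :=
              Finset.sum_congr rfl fun j _ => by
                rw [abs_mul, abs_of_pos (hr0 j k0)]
          _ ≤ ∑ j ∈ Finset.univ.erase k0, r j k0 * |v k0| :=
              Finset.sum_le_sum fun j _ =>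
                mul_le_mul_of_nonneg_left (hk0 j (Finset.mem_univ j)) (hr0 j k0).le
          _ = (∑ j ∈ Finset.univ.erase k0, r j k0) * |v k0| := by rw [Finset.sum_mul]
      calc |v k0| = w k0 * |∑ j ∈ Finset.univ.erase k0, r j k0 * v j| := e0
        _ ≤ w k0 * ((∑ j ∈ Finset.univ.erase k0, r j k0) * |v k0|) :=
            mul_le_mul_of_nonneg_left hstep (hw0 k0).le
    nlinarith [hρ1 k0, hw0 k0, mul_pos (hw0 k0) hM,
      mul_lt_mul_of_pos_right (hρ1 k0) hM]
  have hunit : IsUnit (1 - A) := (Matrix.isUnit_iff_isUnit_det _).mpr (isUnit_iff_ne_zero.mpr hdet)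
  have hudet : IsUnit (1 - A).det := isUnit_iff_ne_zero.mpr hdet
  -- bounds for fixed points
  have hb_bounds : ∀ x : Fin K → ℝ,
      (∀ k, x k = w k * (1 + ∑ j ∈ Finset.univ.erase k, r j k * (1 - x j))) →
      ∀ k, 0 < x k ∧ x k < 1 := by
    intro x hx k
    obtain ⟨k0, -, hk0⟩ := Finset.exists_max_image Finset.univ x ⟨k, Finset.mem_univ k⟩
    obtain ⟨k1, -, hk1⟩ := Finset.exists_min_image Finset.univ x ⟨k, Finset.mem_univ k⟩
    have hub : ∀ i, x i ≤ w i + (w i * ∑ j ∈ Finset.univ.erase i, r j i) * (1 - x k1) := by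
      intro i
      have hs : ∑ j ∈ Finset.univ.erase i, r j i * (1 - x j)
          ≤ (∑ j ∈ Finset.univ.erase i, r j i) * (1 - x k1) := by
        rw [Finset.sum_mul]
        exact Finset.sum_le_sum fun j _ =>
          mul_le_mul_of_nonneg_left (by linarith [hk1 j (Finset.mem_univ j)]) (hr0 j i).le
      have h := mul_le_mul_of_nonneg_left (add_le_add_left hs 1) (hw0 i).le
      rw [hx i]
      nlinarith [h]
    have hlb : ∀ i, w i + (w i * ∑ j ∈ Finset.univ.erase i, r j i) * (1 - x k0) ≤ x i := by
      intro i
      have hs : (∑ j ∈ Finset.univ.erase i, r j i) * (1 - x k0)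
          ≤ ∑ j ∈ Finset.univ.erase i, r j i * (1 - x j) := by
        rw [Finset.sum_mul]
        exact Finset.sum_le_sum fun j _ =>
          mul_le_mul_of_nonneg_left (by linarith [hk0 j (Finset.mem_univ j)]) (hr0 j i).le
      have h := mul_le_mul_of_nonneg_left (add_le_add_left hs 1) (hw0 i).le
      rw [hx i]
      nlinarith [h]
    have hm1 : x k1 < 1 := by
      by_contra h
      push_neg at h
      have h2 := hub k0
      have h3 : (w k0 * ∑ j ∈ Finset.univ.erase k0, r j k0) * (1 - x k1) ≤ 0 :=
        mul_nonpos_of_nonneg_of_nonpos (hρnn k0) (by linarith)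
      have h4 := hk1 k0 (Finset.mem_univ k0)
      have h5 := hw1 k0
      linarith
    have hm0 : 0 < x k1 := by
      by_contra h
      push_neg at h
      have h1 := hlb k1
      have h2 := hub k0
      rcases le_or_gt (x k0) 1 with hM1 | hM1
      · have h3 : 0 ≤ (w k1 * ∑ j ∈ Finset.univ.erase k1, r j k1) * (1 - x k0) :=
          mul_nonneg (hρnn k1) (by linarith)
        have := hw0 k1
        linarith
      · have h3 : (1 - w k1) * (1 - x k0)
            ≤ (w k1 * ∑ j ∈ Finset.univ.erase k1, r j k1) * (1 - x k0) :=
          mul_le_mul_of_nonpos_right (hρ1 k1).le (by linarith)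
        have h4 : (w k0 * ∑ j ∈ Finset.univ.erase k0, r j k0) * (1 - x k1)
            ≤ (1 - w k0) * (1 - x k1) :=
          mul_le_mul_of_nonneg_right (hρ1 k0).le (by linarith)
        have h2' : x k0 ≤ 1 - (1 - w k0) * x k1 := by nlinarith [h2, h4]
        have h1' : 1 - (1 - w k1) * x k0 ≤ x k1 := by nlinarith [h1, h3]
        have h5 : (1 - w k1) * x k0 ≤ (1 - w k1) * (1 - (1 - w k0) * x k1) :=
          mul_le_mul_of_nonneg_left h2' (by linarith [hw1 k1])
        nlinarith [h1', h5, hw0 k1, hw1 k1, hw0 k0, hw1 k0,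
          mul_nonneg (mul_nonneg (by linarith [hw1 k1] : (0:ℝ) ≤ 1 - w k1)
            (by linarith [hw0 k0] : (0:ℝ) ≤ w k0)) (neg_nonneg.mpr h),
          mul_nonneg (by linarith [hw0 k1] : (0:ℝ) ≤ w k1) (neg_nonneg.mpr h)]
    have hM1 : x k0 < 1 := by
      have h2 := hub k0
      have h3 : (w k0 * ∑ j ∈ Finset.univ.erase k0, r j k0) * (1 - x k1)
          ≤ w k0 * ∑ j ∈ Finset.univ.erase k0, r j k0 :=
        mul_le_of_le_one_right (hρnn k0) (by linarith)
      linarith [hρ1 k0]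
    exact ⟨by linarith [hk1 k (Finset.mem_univ k)], by linarith [hk0 k (Finset.mem_univ k)]⟩
  -- utility rewriting
  have hutil : ∀ (z : Fin K → ℝ) (k : Fin K) (y : ℝ),
      util K α n₀ β P c k (Function.update z k y)
      = α * Real.logb 2 (1 + (1 - y) * P k * c k k /
          (n₀ * α + ∑ j ∈ Finset.univ.erase k, (1 - z j) * P j * c j k))
        + β k * Real.logb 2 (1 + y * P k * c k k / (n₀ * β k)) := by
    intro z k y
    have hs : ∑ j ∈ Finset.univ.erase k, (1 - Function.update z k y j) * P j * c j k
        = ∑ j ∈ Finset.univ.erase k, (1 - z j) * P j * c j k :=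
      Finset.sum_congr rfl fun j hj => by
        rw [Function.update_of_ne (Finset.ne_of_mem_erase hj)]
    unfold util
    rw [Function.update_self, hs]
  -- single-player optimality, adapted
  have hopt : ∀ (z : Fin K → ℝ), (∀ j, 0 ≤ z j ∧ z j ≤ 1) → ∀ (k : Fin K) (y ys : ℝ),
      0 ≤ y → y ≤ 1 →
      ys = w k * (1 + ∑ j ∈ Finset.univ.erase k, r j k * (1 - z j)) →
      (util K α n₀ β P c k (Function.update z k y)
        ≤ util K α n₀ β P c k (Function.update z k ys))
      ∧ (y ≠ ys → util K α n₀ β P c k (Function.update z k y)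
        < util K α n₀ β P c k (Function.update z k ys)) := by
    intro z hz k y ys hy0 hy1 hys
    rw [hutil z k y, hutil z k ys]
    have hG' := hG k
    have hI0 : 0 ≤ ∑ j ∈ Finset.univ.erase k, (1 - z j) * P j * c j k :=
      Finset.sum_nonneg fun j _ =>
        mul_nonneg (mul_nonneg (by linarith [(hz j).2]) (hP j).le) (hc j k).le
    have hsum : ((∑ j ∈ Finset.univ.erase k, (1 - z j) * P j * c j k) + P k * c k k)
        / (P k * c k k)
        = 1 + ∑ j ∈ Finset.univ.erase k, r j k * (1 - z j) := by
      rw [add_div, div_self hG'.ne', Finset.sum_div, add_comm]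
      congr 1
      exact Finset.sum_congr rfl fun j hj => by simp only [hrdef]; ring
    have hys' : ys = β k / (α + β k)
        * (((∑ j ∈ Finset.univ.erase k, (1 - z j) * P j * c j k) + P k * c k k)
          / (P k * c k k)) := by
      rw [hys, hsum]
      try simp only [hwdef]
    have key := single_opt hα (hβ k) hn hG' hI0 hy0 hy1 hys'
    simp only [mul_assoc]
    simp only [mul_assoc] at key
    exact key
  -- the equilibrium
  set x : Fin K → ℝ := (1 - A)⁻¹.mulVec b with hxdef
  have hx_eq : (1 - A).mulVec x = b := by
    rw [hxdef, Matrix.mulVec_mulVec, Matrix.mul_nonsing_inv _ hudet, Matrix.one_mulVec]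
  have hFPx := (hmv x).mp hx_eq
  have hxb := hb_bounds x hFPx
  refine ⟨hunit, x, rfl, fun k => ⟨(hxb k).1, (hxb k).2⟩, ⟨⟨fun k => ⟨(hxb k).1.le, (hxb k).2.le⟩,
    ?_⟩, ?_⟩⟩
  · -- Nash equilibrium property
    intro k y hy
    have h := (hopt x (fun j => ⟨(hxb j).1.le, (hxb j).2.le⟩) k y (x k) hy.1 hy.2 (hFPx k)).1
    rwa [Function.update_eq_self] at h
  · -- uniqueness
    rintro z ⟨hz01, hzNE⟩
    have hFPz : ∀ k, z k = w k * (1 + ∑ j ∈ Finset.univ.erase k, r j k * (1 - z j)) := by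
      intro k
      set ys := w k * (1 + ∑ j ∈ Finset.univ.erase k, r j k * (1 - z j)) with hysdef
      have hys0 : 0 ≤ ys := by
        have : 0 ≤ ∑ j ∈ Finset.univ.erase k, r j k * (1 - z j) :=
          Finset.sum_nonneg fun j _ => mul_nonneg (hr0 j k).le (by linarith [(hz01 j).2])
        rw [hysdef]
        exact mul_nonneg (hw0 k).le (by linarith)
      have hys1 : ys ≤ 1 := by
        have hs : ∑ j ∈ Finset.univ.erase k, r j k * (1 - z j)
            ≤ ∑ j ∈ Finset.univ.erase k, r j k :=
          Finset.sum_le_sum fun j _ => by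
            nlinarith [(hz01 j).1, (hr0 j k).le]
        have := mul_le_mul_of_nonneg_left (add_le_add_left hs 1) (hw0 k).le
        have h2 := hρ1 k
        rw [hysdef]
        nlinarith [this]
      by_contra hne
      have h := (hopt z (fun j => ⟨(hz01 j).1, (hz01 j).2⟩) k (z k) ys
        (hz01 k).1 (hz01 k).2 hysdef).2 hne
      rw [Function.update_eq_self] at h
      have h2 := hzNE k ys ⟨hys0, hys1⟩
      linarith
    have hz_eq : (1 - A).mulVec z = b := (hmv z).mpr hFPz
    calc z = (1 - A)⁻¹.mulVec ((1 - A).mulVec z) := by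
          rw [Matrix.mulVec_mulVec, Matrix.nonsing_inv_mul _ hudet, Matrix.one_mulVec]
      _ = x := by rw [hz_eq]
end

section
/- Let A₁, …, A_K be K×K matrices where A_k equals the identity matrix except that its k-th row is replaced by a row vector r_k with r_k(k) = 0 and Σ_j |r_k(j)| < 1. Then every absolute row sum of the product A_K·A_{K−1}⋯A₁ is strictly less than 1; consequently the spectral radius of the product is strictly less than 1. -/
lemma stmt12_key (K : ℕ) (A : Fin K → Matrix (Fin K) (Fin K) ℝ)
    (r : Fin K → Fin K → ℝ)
    (hr0 : ∀ k, r k k = 0) (hr1 : ∀ k, (∑ j, |r k j|) < 1)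
    (hA : ∀ k i j, A k i j = if i = k then r k j else if i = j then 1 else 0) :
    ∀ l, l ≤ K →
      (∀ i : Fin K, (i : ℕ) < l →
        (∑ j, |(((List.ofFn A).take l).reverse.prod) i j|) < 1) ∧
      (∀ i : Fin K, l ≤ (i : ℕ) → ∀ j,
        (((List.ofFn A).take l).reverse.prod) i j = if i = j then 1 else 0) := by
  intro l
  induction l with
  | zero =>
    intro _
    constructor
    · intro i hi; omega
    · intro i _ j
      simp [Matrix.one_apply]
  | succ l ih =>
    intro hl
    have hlK : l < K := by omega
    obtain ⟨ih1, ih2⟩ := ih (by omega)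
    set M := ((List.ofFn A).take l).reverse.prod with hM
    have htake : (List.ofFn A).take (l + 1) = (List.ofFn A).take l ++ [A ⟨l, hlK⟩] := by
      rw [List.take_succ]
      congr 1
      simp [List.getElem?_ofFn, hlK]
    have hprod : ((List.ofFn A).take (l + 1)).reverse.prod = A ⟨l, hlK⟩ * M := by
      rw [htake, List.reverse_append, List.reverse_singleton, List.singleton_append,
        List.prod_cons]
    -- row sums of M are ≤ 1
    have hrowsum : ∀ m : Fin K, (∑ j, |M m j|) ≤ 1 := by
      intro m
      rcases lt_or_ge (m : ℕ) l with h | h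
      · exact (ih1 m h).le
      · have : ∀ j, M m j = if m = j then 1 else 0 := ih2 m h
        simp only [this, apply_ite abs, abs_one, abs_zero]
        rw [Finset.sum_ite_eq]
        simp
    have hentry : ∀ i j, (A ⟨l, hlK⟩ * M) i j =
        if (i : ℕ) = l then ∑ m, r ⟨l, hlK⟩ m * M m j else M i j := by
      intro i j
      rw [Matrix.mul_apply]
      by_cases hi : (i : ℕ) = l
      · have : i = ⟨l, hlK⟩ := Fin.ext hi
        subst this
        simp only [hi, if_true]
        apply Finset.sum_congr rfl
        intro m _
        rw [hA]
        simp
      · simp only [hi, if_false]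
        have : ∀ m, A ⟨l, hlK⟩ i m = if i = m then 1 else 0 := by
          intro m
          rw [hA]
          have : ¬ i = ⟨l, hlK⟩ := fun h => hi (by rw [h])
          simp [this]
        simp only [this, ite_mul, one_mul, zero_mul]
        rw [Finset.sum_ite_eq]
        simp
    constructor
    · intro i hi
      rw [hprod]
      by_cases hil : (i : ℕ) = l
      · -- the new row
        have hle : (∑ j, |(A ⟨l, hlK⟩ * M) i j|) ≤ ∑ m, |r ⟨l, hlK⟩ m| := by
          calc (∑ j, |(A ⟨l, hlK⟩ * M) i j|)
              ≤ ∑ j, ∑ m, |r ⟨l, hlK⟩ m| * |M m j| := by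
                apply Finset.sum_le_sum
                intro j _
                rw [hentry i j, if_pos hil]
                refine (Finset.abs_sum_le_sum_abs _ _).trans ?_
                apply Finset.sum_le_sum
                intro m _
                rw [abs_mul]
            _ = ∑ m, |r ⟨l, hlK⟩ m| * ∑ j, |M m j| := by
                rw [Finset.sum_comm]
                simp [Finset.mul_sum]
            _ ≤ ∑ m, |r ⟨l, hlK⟩ m| * 1 := by
                apply Finset.sum_le_sum
                intro m _
                exact mul_le_mul_of_nonneg_left (hrowsum m) (abs_nonneg _)
            _ = ∑ m, |r ⟨l, hlK⟩ m| := by simp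
        exact hle.trans_lt (hr1 _)
      · have hil' : (i : ℕ) < l := by omega
        calc (∑ j, |(A ⟨l, hlK⟩ * M) i j|) = ∑ j, |M i j| := by
              apply Finset.sum_congr rfl
              intro j _
              rw [hentry i j, if_neg hil]
          _ < 1 := ih1 i hil'
    · intro i hi j
      rw [hprod, hentry i j, if_neg (by omega)]
      exact ih2 i (by omega) j

theorem stmt_12 (K : ℕ) (A : Fin K → Matrix (Fin K) (Fin K) ℝ)
    (r : Fin K → Fin K → ℝ)
    (hr0 : ∀ k, r k k = 0) (hr1 : ∀ k, (∑ j, |r k j|) < 1)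
    (hA : ∀ k i j, A k i j = if i = k then r k j else if i = j then 1 else 0) :
    (∀ i, (∑ j, |((List.ofFn A).reverse.prod) i j|) < 1) ∧
    ∀ (μ : ℂ) (v : Fin K → ℂ), v ≠ 0 →
      (((List.ofFn A).reverse.prod).map (algebraMap ℝ ℂ)).mulVec v = μ • v →
        ‖μ‖ < 1 := by
  have hfull := stmt12_key K A r hr0 hr1 hA K le_rfl
  have htake : (List.ofFn A).take K = List.ofFn A := by
    apply List.take_of_length_le
    simp
  rw [htake] at hfull
  obtain ⟨h1, _⟩ := hfull
  have hrows : ∀ i, (∑ j, |((List.ofFn A).reverse.prod) i j|) < 1 := fun i => h1 i i.isLt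
  refine ⟨hrows, ?_⟩
  intro μ v hv hev
  set M := (List.ofFn A).reverse.prod with hM
  -- K > 0
  rcases Nat.eq_zero_or_pos K with hK | hK
  · exfalso; apply hv; funext i; exact absurd i.isLt (by omega)
  -- pick index maximizing |v i|
  obtain ⟨i, -, hmax⟩ := Finset.exists_max_image Finset.univ (fun j => ‖v j‖)
    ⟨⟨0, hK⟩, Finset.mem_univ _⟩
  have hvi : 0 < ‖v i‖ := by
    rcases eq_or_lt_of_le (norm_nonneg (v i)) with h | h
    · exfalso; apply hv; funext j
      have h2 : ‖v j‖ ≤ 0 := h ▸ hmax j (Finset.mem_univ j)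
      have : ‖v j‖ = 0 := le_antisymm h2 (norm_nonneg _)
      simpa using this
    · exact h
  have hline : ‖μ‖ * ‖v i‖ < 1 * ‖v i‖ := by
    have h1 : ‖μ‖ * ‖v i‖ = ‖(μ • v) i‖ := by
      rw [Pi.smul_apply, smul_eq_mul, norm_mul]
    have h2 : (μ • v) i = ∑ j, (algebraMap ℝ ℂ) (M i j) * v j := by
      rw [← hev]; rfl
    calc ‖μ‖ * ‖v i‖
        = ‖∑ j, (algebraMap ℝ ℂ) (M i j) * v j‖ := by rw [h1, h2]
      _ ≤ ∑ j, ‖(algebraMap ℝ ℂ) (M i j) * v j‖ := norm_sum_le _ _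
      _ = ∑ j, |M i j| * ‖v j‖ := by
          apply Finset.sum_congr rfl
          intro j _
          rw [norm_mul]
          simp [Complex.norm_real]
      _ ≤ ∑ j, |M i j| * ‖v i‖ := by
          apply Finset.sum_le_sum
          intro j _
          exact mul_le_mul_of_nonneg_left (hmax j (Finset.mem_univ j)) (abs_nonneg _)
      _ = (∑ j, |M i j|) * ‖v i‖ := by rw [Finset.sum_mul]
      _ < 1 * ‖v i‖ := by
          exact mul_lt_mul_of_pos_right (hrows i) hvi
  exact lt_of_mul_lt_mul_right hline (norm_nonneg _)
end

section
/- With A_k as in the alternating-move update (identity except k-th row replaced by the k-th row of A, which has zero diagonal entry and absolute row sum < 1), the cyclic iteration x((i+1)K) = (A_K⋯A₁)·x(iK) + b̃ converges for every initial condition to its unique fixed point, and this fixed point equals (I − A)⁻¹ b, the unique Nash equilibrium of the weak-interference COG. -/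
theorem stmt_13 (K : ℕ) (hK : 0 < K) (α : ℝ) (β P : Fin K → ℝ)
    (c : Fin K → Fin K → ℝ)
    (hα : 0 < α) (hβ : ∀ k, 0 < β k) (hP : ∀ k, 0 < P k) (hc : ∀ j k, 0 < c j k)
    (hw : ∀ k, (∑ j ∈ Finset.univ.erase k, P j * c j k) < α / β k * (P k * c k k))
    (A : Matrix (Fin K) (Fin K) ℝ)
    (hA : ∀ k j, A k j =
      if j = k then 0 else -(β k / (α + β k)) * (P j * c j k / (P k * c k k)))
    (b : Fin K → ℝ)
    (hb : ∀ k, b k = β k / (α + β k) * ((∑ j, P j * c j k) / (P k * c k k)))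
    (x : ℕ → Fin K → ℝ)
    -- alternating-move update: at time t, player (t mod K) best-responds
    (hx : ∀ t : ℕ, ∀ k : Fin K, (k : ℕ) = t % K →
      x (t + 1) = Function.update (x t) k ((A.mulVec (x t) + b) k)) :
    Filter.Tendsto (fun i => x (i * K)) Filter.atTop
        (nhds ((1 - A)⁻¹.mulVec b)) ∧
    (1 - A)⁻¹.mulVec b = A.mulVec ((1 - A)⁻¹.mulVec b) + b ∧
    ∀ z : Fin K → ℝ, z = A.mulVec z + b → z = (1 - A)⁻¹.mulVec b := by
  haveI : Nonempty (Fin K) := ⟨⟨0, hK⟩⟩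
  -- row sums of |A| are < 1
  have hrow : ∀ k, (∑ j, |A k j|) < 1 := by
    intro k
    have hD : 0 < P k * c k k := mul_pos (hP k) (hc k k)
    have hsum : (∑ j, |A k j|) =
        β k / (α + β k) * ((∑ j ∈ Finset.univ.erase k, P j * c j k) / (P k * c k k)) := by
      rw [← Finset.add_sum_erase _ _ (Finset.mem_univ k)]
      have h0 : |A k k| = 0 := by rw [hA k k, if_pos rfl, abs_zero]
      rw [h0, zero_add]
      have hterm : ∀ j ∈ Finset.univ.erase k,
          |A k j| = β k / (α + β k) * (P j * c j k) / (P k * c k k) := by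
        intro j hj
        have hjk : j ≠ k := Finset.ne_of_mem_erase hj
        rw [hA k j, if_neg hjk]
        have h1 : 0 ≤ β k / (α + β k) := div_nonneg (hβ k).le (by linarith [hβ k])
        have h2 : 0 ≤ P j * c j k / (P k * c k k) :=
          div_nonneg (mul_pos (hP j) (hc j k)).le (mul_pos (hP k) (hc k k)).le
        rw [abs_mul, abs_neg, abs_of_nonneg h1, abs_of_nonneg h2]
        rw [← mul_div_assoc]
      rw [Finset.sum_congr rfl hterm, ← Finset.sum_div, ← Finset.mul_sum, mul_div_assoc]
    rw [hsum]
    have hS := hw k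
    have hB := hβ k
    have hαB : 0 < α + β k := by linarith
    have hBS : β k * (∑ j ∈ Finset.univ.erase k, P j * c j k) < α * (P k * c k k) := by
      have := (mul_lt_mul_iff_right₀ hB).mpr hS
      rwa [show β k * (α / β k * (P k * c k k)) = α * (P k * c k k) by
        field_simp] at this
    rw [div_mul_div_comm, div_lt_one (by positivity)]
    nlinarith [hD, hB]
  set θ : ℝ := Finset.univ.sup' Finset.univ_nonempty (fun k => ∑ j, |A k j|) with hθdef
  have hθ1 : θ < 1 := by
    rw [hθdef, Finset.sup'_lt_iff]
    exact fun k _ => hrow k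
  have hθ0 : 0 ≤ θ := by
    refine le_trans ?_ (Finset.le_sup' (fun k => ∑ j, |A k j|) (Finset.mem_univ ⟨0, hK⟩))
    positivity
  -- key bound
  have hbound : ∀ (v : Fin K → ℝ) (k : Fin K), |A.mulVec v k| ≤ θ * ‖v‖ := by
    intro v k
    have h1 : A.mulVec v k = ∑ j, A k j * v j := by
      simp [Matrix.mulVec, dotProduct]
    rw [h1]
    calc |∑ j, A k j * v j| ≤ ∑ j, |A k j * v j| := Finset.abs_sum_le_sum_abs _ _
      _ = ∑ j, |A k j| * |v j| := by simp [abs_mul]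
      _ ≤ ∑ j, |A k j| * ‖v‖ := by
          refine Finset.sum_le_sum (fun j _ => ?_)
          refine mul_le_mul_of_nonneg_left ?_ (abs_nonneg _)
          exact (Real.norm_eq_abs (v j)) ▸ norm_le_pi_norm v j
      _ = (∑ j, |A k j|) * ‖v‖ := (Finset.sum_mul _ _ _).symm
      _ ≤ θ * ‖v‖ := by
          refine mul_le_mul_of_nonneg_right ?_ (norm_nonneg v)
          exact Finset.le_sup' (fun k => ∑ j, |A k j|) (Finset.mem_univ k)
  -- kernel lemma
  have hker : ∀ u : Fin K → ℝ, u = A.mulVec u → u = 0 := by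
    intro u hu
    have h1 : ‖u‖ ≤ θ * ‖u‖ := by
      refine (pi_norm_le_iff_of_nonneg (by positivity)).mpr (fun k => ?_)
      rw [Real.norm_eq_abs]
      calc |u k| = |A.mulVec u k| := by rw [← hu]
        _ ≤ θ * ‖u‖ := hbound u k
    have h2 : ‖u‖ = 0 := le_antisymm (by nlinarith [norm_nonneg u]) (norm_nonneg u)
    exact norm_eq_zero.mp h2
  -- invertibility
  have hdet : IsUnit (1 - A).det := by
    rw [isUnit_iff_ne_zero]
    intro h0
    obtain ⟨v, hv0, hv⟩ := (Matrix.exists_mulVec_eq_zero_iff).mpr h0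
    apply hv0
    apply hker
    have : (1 - A).mulVec v = v - A.mulVec v := by
      rw [Matrix.sub_mulVec, Matrix.one_mulVec]
    rw [this] at hv
    exact sub_eq_zero.mp hv
  set xs : Fin K → ℝ := (1 - A)⁻¹.mulVec b with hxsdef
  -- fixed point property
  have hfix : xs = A.mulVec xs + b := by
    have h1 : (1 - A).mulVec xs = b := by
      rw [hxsdef, Matrix.mulVec_mulVec, Matrix.mul_nonsing_inv _ hdet, Matrix.one_mulVec]
    rw [Matrix.sub_mulVec, Matrix.one_mulVec] at h1
    funext k
    have := congrFun h1 k
    simp only [Pi.sub_apply] at this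
    simp only [Pi.add_apply]
    linarith
  -- uniqueness
  have huniq : ∀ z : Fin K → ℝ, z = A.mulVec z + b → z = xs := by
    intro z hz
    have h1 : z - xs = A.mulVec (z - xs) := by
      rw [Matrix.mulVec_sub]
      funext k
      have h2 := congrFun hz k
      have h3 := congrFun hfix k
      simp only [Pi.add_apply] at h2 h3
      simp only [Pi.sub_apply]
      linarith
    have := hker _ h1
    exact sub_eq_zero.mp this
  -- core contraction bound
  have hcore : ∀ (v : Fin K → ℝ) (k : Fin K), ‖(A.mulVec v + b) k - xs k‖ ≤ θ * ‖v - xs‖ := by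
    intro v k
    have h3 : (A.mulVec v + b) k - xs k = A.mulVec (v - xs) k := by
      have h2 := congrFun hfix k
      simp only [Pi.add_apply] at h2
      simp only [Matrix.mulVec_sub, Pi.sub_apply, Pi.add_apply]
      linarith
    rw [h3, Real.norm_eq_abs]
    exact hbound _ k
  -- one step is non-expansive
  have stepA : ∀ t, ‖x (t + 1) - xs‖ ≤ ‖x t - xs‖ := by
    intro t
    have hkK : t % K < K := Nat.mod_lt t hK
    rw [hx t ⟨t % K, hkK⟩ rfl]
    refine (pi_norm_le_iff_of_nonneg (norm_nonneg _)).mpr (fun j => ?_)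
    by_cases hj : j = (⟨t % K, hkK⟩ : Fin K)
    · subst hj
      simp only [Pi.sub_apply, Function.update_self]
      refine le_trans (hcore (x t) _) ?_
      nlinarith [norm_nonneg (x t - xs)]
    · simp only [Pi.sub_apply, Function.update_of_ne hj]
      exact norm_le_pi_norm (x t - xs) j
  have stepAiter : ∀ t d, ‖x (t + d) - xs‖ ≤ ‖x t - xs‖ := by
    intro t d
    induction d with
    | zero => simp
    | succ n ih => exact le_trans (stepA (t + n)) ih
  -- stability of non-updated coordinates
  have stable : ∀ t (j : Fin K), (j : ℕ) ≠ t % K → x (t + 1) j = x t j := by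
    intro t j hj
    have hkK : t % K < K := Nat.mod_lt t hK
    rw [hx t ⟨t % K, hkK⟩ rfl]
    rw [Function.update_of_ne (by
      intro h; apply hj; rw [h])]
  -- full cycle contraction
  have cyc : ∀ i, ‖x ((i + 1) * K) - xs‖ ≤ θ * ‖x (i * K) - xs‖ := by
    intro i
    refine (pi_norm_le_iff_of_nonneg (by positivity)).mpr (fun k => ?_)
    have hkK := k.isLt
    have key : ∀ d, (k : ℕ) + 1 + d ≤ K →
        x (i * K + (k : ℕ) + 1 + d) k = x (i * K + (k : ℕ) + 1) k := by
      intro d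
      induction d with
      | zero => intro _; rfl
      | succ n ih =>
        intro hle
        have hmod : (i * K + (k : ℕ) + 1 + n) % K = (k : ℕ) + 1 + n := by
          rw [show i * K + (k : ℕ) + 1 + n = ((k : ℕ) + 1 + n) + i * K by ring,
            Nat.add_mul_mod_self_right, Nat.mod_eq_of_lt (by omega)]
        rw [show i * K + (k : ℕ) + 1 + (n + 1) = (i * K + (k : ℕ) + 1 + n) + 1 by ring]
        rw [stable _ k (by rw [hmod]; omega)]
        exact ih (by omega)
    have hik : (i + 1) * K = i * K + (k : ℕ) + 1 + (K - (k : ℕ) - 1) := by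
      rw [add_mul, one_mul]; omega
    have hk1 : x ((i + 1) * K) k = x (i * K + (k : ℕ) + 1) k := by
      rw [hik]; exact key _ (by omega)
    have hmod2 : ((k : Fin K) : ℕ) = (i * K + (k : ℕ)) % K := by
      rw [show i * K + (k : ℕ) = (k : ℕ) + i * K by ring,
        Nat.add_mul_mod_self_right, Nat.mod_eq_of_lt hkK]
    have hupd := hx (i * K + (k : ℕ)) k hmod2
    simp only [Pi.sub_apply]
    rw [hk1, hupd, Function.update_self]
    calc ‖(A.mulVec (x (i * K + (k : ℕ))) + b) k - xs k‖
        ≤ θ * ‖x (i * K + (k : ℕ)) - xs‖ := hcore _ k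
      _ ≤ θ * ‖x (i * K) - xs‖ := mul_le_mul_of_nonneg_left (stepAiter (i * K) (k : ℕ)) hθ0
  -- geometric decay
  have geo : ∀ i, ‖x (i * K) - xs‖ ≤ θ ^ i * ‖x 0 - xs‖ := by
    intro i
    induction i with
    | zero => simp
    | succ n ih =>
      calc ‖x ((n + 1) * K) - xs‖ ≤ θ * ‖x (n * K) - xs‖ := cyc n
        _ ≤ θ * (θ ^ n * ‖x 0 - xs‖) := mul_le_mul_of_nonneg_left ih hθ0
        _ = θ ^ (n + 1) * ‖x 0 - xs‖ := by ring
  refine ⟨?_, hfix, huniq⟩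
  rw [tendsto_iff_norm_sub_tendsto_zero]
  apply squeeze_zero (fun i => norm_nonneg _) geo
  have h := (tendsto_pow_atTop_nhds_zero_of_lt_one hθ0 hθ1).mul_const ‖x 0 - xs‖
  simpa using h
end

section
/- For any fixed strategies x_{-k} ∈ [0,1]^{K−1} of the other players, the strategy x_k = BR_k(x_{-k}) = min{(β_k/(α+β_k))[1 + Σ_{j≠k} P_j c_{j,k}(1−x_j)/(P_k c_{k,k})], 1} is the unique maximizer of u_k(·, x_{-k}) over [0,1]. -/
open Real Set

theorem stmt_16 (K : ℕ) (α n₀ : ℝ) (β P : Fin K → ℝ) (c : Fin K → Fin K → ℝ)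
    (hα : 0 < α) (hn : 0 < n₀) (hβ : ∀ k, 0 < β k) (hP : ∀ k, 0 < P k)
    (hc : ∀ j k, 0 < c j k) (k : Fin K) (x : Fin K → ℝ)
    (hx : ∀ j, x j ∈ Icc (0:ℝ) 1) :
    let br := min (β k / (α + β k) *
      (1 + (∑ j ∈ Finset.univ.erase k, P j * c j k * (1 - x j)) / (P k * c k k))) 1
    br ∈ Icc (0:ℝ) 1 ∧
    ∀ y ∈ Icc (0:ℝ) 1, y ≠ br →
      util K α n₀ β P c k (Function.update x k y) <
        util K α n₀ β P c k (Function.update x k br) := by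
  intro br
  set A := P k * c k k with hA_def
  have hA : 0 < A := mul_pos (hP k) (hc k k)
  set I := ∑ j ∈ Finset.univ.erase k, P j * c j k * (1 - x j) with hI_def
  have hI : 0 ≤ I := Finset.sum_nonneg fun j _ =>
    mul_nonneg (mul_nonneg (hP j).le (hc j k).le) (by linarith [(hx j).2])
  set B := n₀ * α + I with hB_def
  have hB : 0 < B := add_pos_of_pos_of_nonneg (mul_pos hn hα) hI
  set D := n₀ * β k with hD_def
  have hD : 0 < D := mul_pos hn (hβ k)
  have hβk := hβ k
  have hαβ : 0 < α + β k := by linarith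
  set ys := β k / (α + β k) * (1 + I / A) with hys_def
  have hys_pos : 0 < ys := by
    apply mul_pos (div_pos hβk hαβ)
    have : 0 ≤ I / A := div_nonneg hI hA.le
    linarith
  have hbr_def : br = min ys 1 := rfl
  have hbr0 : 0 ≤ br := le_min hys_pos.le zero_le_one
  have hbr1 : br ≤ 1 := min_le_right _ _
  set g : ℝ → ℝ := fun y => α * Real.log (B + (1 - y) * A) + β k * Real.log (D + y * A)
    with hg_def
  have harg1 : ∀ y ∈ Icc (0:ℝ) 1, 0 < B + (1 - y) * A := fun y hy => by
    nlinarith [hy.2]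
  have harg2 : ∀ y ∈ Icc (0:ℝ) 1, 0 < D + y * A := fun y hy => by
    nlinarith [hy.1]
  -- rewrite util in terms of g
  have hutil : ∀ y ∈ Icc (0:ℝ) 1, util K α n₀ β P c k (Function.update x k y)
      = (g y - (α * Real.log B + β k * Real.log D)) / Real.log 2 := by
    intro y hy
    have h1 := harg1 y hy
    have h2 := harg2 y hy
    have hsum : ∑ j ∈ Finset.univ.erase k, (1 - Function.update x k y j) * P j * c j k = I := by
      rw [hI_def]
      refine Finset.sum_congr rfl fun j hj => ?_
      rw [Function.update_of_ne (Finset.ne_of_mem_erase hj)]; ring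
    simp only [util, Function.update_self, hsum]
    rw [Real.logb, Real.logb]
    have e1 : 1 + (1 - y) * P k * c k k / (n₀ * α + I) = (B + (1 - y) * A) / B := by
      rw [hB_def, hA_def]; field_simp
    have e2 : 1 + y * P k * c k k / (n₀ * β k) = (D + y * A) / D := by
      rw [hD_def, hA_def]; field_simp
    rw [e1, e2, Real.log_div h1.ne' hB.ne', Real.log_div h2.ne' hD.ne']
    simp only [hg_def]; ring
  -- derivative
  have hderiv : ∀ y ∈ Ioo (0:ℝ) 1,
      HasDerivAt g (α * (-A / (B + (1 - y) * A)) + β k * (A / (D + y * A))) y := by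
    intro y hy
    have h1 := harg1 y (Ioo_subset_Icc_self hy)
    have h2 := harg2 y (Ioo_subset_Icc_self hy)
    have d1 : HasDerivAt (fun y : ℝ => B + (1 - y) * A) (-A) y := by
      have : HasDerivAt (fun y : ℝ => B + (1 - y) * A) (0 + (0 - 1) * A) y :=
        (hasDerivAt_const y B).add
          (((hasDerivAt_const y (1:ℝ)).sub (hasDerivAt_id y)).mul_const A)
      simpa using this
    have d2 : HasDerivAt (fun y : ℝ => D + y * A) A y := by
      exact ((hasDerivAt_const y D).add ((hasDerivAt_id y).mul_const A)).congr_deriv (by simp)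
    exact ((d1.log h1.ne').const_mul α).add ((d2.log h2.ne').const_mul (β k))
  -- value of derivative
  have hval : ∀ y ∈ Ioo (0:ℝ) 1,
      α * (-A / (B + (1 - y) * A)) + β k * (A / (D + y * A))
        = (α + β k) * A * A * (ys - y) / ((B + (1 - y) * A) * (D + y * A)) := by
    intro y hy
    have h1 := (harg1 y (Ioo_subset_Icc_self hy)).ne'
    have h2 := (harg2 y (Ioo_subset_Icc_self hy)).ne'
    rw [hys_def]
    generalize hX : B + (1 - y) * A = X at h1 ⊢
    generalize hY : D + y * A = Y at h2 ⊢
    field_simp [h1, h2, hA.ne', hαβ.ne']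
    subst hX hY
    rw [hB_def, hD_def]
    ring
  have hcont : ContinuousOn g (Icc 0 1) := by
    apply ContinuousOn.add
    · exact continuousOn_const.mul (ContinuousOn.log (by fun_prop)
        fun y hy => (harg1 y hy).ne')
    · exact continuousOn_const.mul (ContinuousOn.log (by fun_prop)
        fun y hy => (harg2 y hy).ne')
  have mono : StrictMonoOn g (Icc 0 br) := by
    apply strictMonoOn_of_deriv_pos (convex_Icc _ _)
      (hcont.mono (Icc_subset_Icc le_rfl hbr1))
    intro y hy
    rw [interior_Icc] at hy
    have hy' : y ∈ Ioo (0:ℝ) 1 := ⟨hy.1, lt_of_lt_of_le hy.2 hbr1⟩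
    rw [(hderiv y hy').deriv, hval y hy']
    have hylt : y < ys := lt_of_lt_of_le hy.2 (min_le_left _ _)
    have h1 := harg1 y (Ioo_subset_Icc_self hy')
    have h2 := harg2 y (Ioo_subset_Icc_self hy')
    apply div_pos _ (mul_pos h1 h2)
    have : 0 < ys - y := by linarith
    positivity
  have anti : StrictAntiOn g (Icc br 1) := by
    apply strictAntiOn_of_deriv_neg (convex_Icc _ _)
      (hcont.mono (Icc_subset_Icc hbr0 le_rfl))
    intro y hy
    rw [interior_Icc] at hy
    have hy' : y ∈ Ioo (0:ℝ) 1 := ⟨lt_of_le_of_lt hbr0 hy.1, hy.2⟩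
    rw [(hderiv y hy').deriv, hval y hy']
    have hbrlt : br < 1 := hy.1.trans hy.2
    have hysy : ys < y := by
      have hys1 : ys < 1 := by
        by_contra h
        push_neg at h
        rw [hbr_def, min_eq_right h] at hbrlt
        exact lt_irrefl _ hbrlt
      have hbys : br = ys := by rw [hbr_def, min_eq_left hys1.le]
      rw [hbys] at hy
      exact hy.1
    have h1 := harg1 y (Ioo_subset_Icc_self hy')
    have h2 := harg2 y (Ioo_subset_Icc_self hy')
    apply div_neg_of_neg_of_pos _ (mul_pos h1 h2)
    have h3 : ys - y < 0 := by linarith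
    nlinarith [mul_pos (mul_pos hαβ hA) hA]
  refine ⟨⟨hbr0, hbr1⟩, fun y hy hne => ?_⟩
  rw [hutil y hy, hutil br ⟨hbr0, hbr1⟩]
  have hlog2 : (0:ℝ) < Real.log 2 := Real.log_pos one_lt_two
  have hgy : g y < g br := by
    rcases lt_or_gt_of_ne hne with hlt | hgt
    · exact mono ⟨hy.1, hlt.le⟩ ⟨hbr0, le_rfl⟩ hlt
    · exact anti ⟨le_rfl, hbr1⟩ ⟨hgt.le, hy.2⟩ hgt
  have h := sub_lt_sub_right hgy (α * Real.log B + β k * Real.log D)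
  gcongr
end
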